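/- For every q with q = 0 or q > 5 there exists a constant C_q > 0, depending only on q, such that for every measurable f : ℝ³ → [0,∞) with ‖f‖_{L∞_q} < ∞, ∫_{ℝ³}(1+|v|²) f(v) dv < ∞, ρ_f > 0 and T_f > 0, the local Maxwellian satisfies ‖𝓜(f)‖_{L∞_q} ≤ C_q ‖f‖_{L∞_q}, i.e. sup_v (1+|v|^q) 𝓜(f)(v) ≤ C_q · ess sup_v (1+|v|^q) f(v). -/

import Mathlib

open MeasureTheory Real
open scoped ENNReal

noncomputable section

/-- Velocity space `ℝ³`. -/
abbrev E3 : Type := EuclideanSpace ℝ (Fin 3)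

/-- Local density `ρ_f = ∫ f dv`. -/
def dens (f : E3 → ℝ) : ℝ := ∫ v, f v

/-- Bulk velocity `U_f`, defined by `ρ_f U_f = ∫ v f dv`. -/
def bulk (f : E3 → ℝ) : E3 := (dens f)⁻¹ • (∫ v, f v • v)

/-- Temperature `T_f`, defined by `3 ρ_f T_f = ∫ |v - U_f|² f dv`. -/
def temp (f : E3 → ℝ) : ℝ := (3 * dens f)⁻¹ * ∫ v, ‖v - bulk f‖ ^ 2 * f v

/-- The local Maxwellian `𝓜(f)(v) = ρ_f (2π T_f)^{-3/2} exp(-|v - U_f|²/(2 T_f))`. -/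
def maxw (f : E3 → ℝ) : E3 → ℝ := fun v =>
  dens f * (2 * π * temp f) ^ (-(3 : ℝ) / 2) * Real.exp (-‖v - bulk f‖ ^ 2 / (2 * temp f))

/-- Weighted norm `‖f‖_{L∞_q} = ess sup_v (1 + |v|^q) f(v)` (as a value in `ℝ≥0∞`). -/
def wnorm (q : ℝ) (f : E3 → ℝ) : ℝ≥0∞ :=
  essSup (fun v => ENNReal.ofReal ((1 + ‖v‖ ^ q) * f v)) volume

open Metric Set

def kap : ℝ := (volume (ball (0:E3) 1)).toReal

lemma kap_pos : 0 < kap := by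
  have h1 : volume (ball (0:E3) 1) < ⊤ := measure_ball_lt_top
  have h2 : 0 < volume (ball (0:E3) 1) := measure_ball_pos _ _ one_pos
  exact ENNReal.toReal_pos h2.ne' h1.ne

lemma finrank_E3 : Module.finrank ℝ E3 = 3 := by
  simp [finrank_euclideanSpace]

lemma vol_ball (c : E3) {R : ℝ} (hR : 0 ≤ R) :
    (volume (ball c R)).toReal = R ^ 3 * kap := by
  rw [Measure.addHaar_ball volume c hR, ENNReal.toReal_mul, ENNReal.toReal_ofReal (by positivity),
    finrank_E3, kap]

lemma cutoff {f : E3 → ℝ} (h0 : ∀ v, 0 ≤ f v) (hf : Integrable f)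
    {c : E3} (h2 : Integrable fun v => ‖v - c‖ ^ 2 * f v)
    {R B : ℝ} (hR : 0 < R) (hB : 0 ≤ B)
    (hb : ∀ᵐ v, v ∈ ball c R → f v ≤ B) :
    ∫ v, f v ≤ B * (R ^ 3 * kap) + R⁻¹ ^ 2 * ∫ v, ‖v - c‖ ^ 2 * f v := by
  have hball : MeasurableSet (ball c R) := measurableSet_ball
  rw [← integral_add_compl hball hf]
  have h2nn : ∀ v, 0 ≤ ‖v - c‖ ^ 2 * f v := fun v => mul_nonneg (by positivity) (h0 v)
  have hb1 : ∫ v in ball c R, f v ≤ B * (R ^ 3 * kap) := by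
    have : ∫ v in ball c R, f v ≤ ∫ _ in ball c R, B := by
      refine integral_mono_of_nonneg (Filter.Eventually.of_forall fun v => h0 v) ?_ ?_
      · exact integrableOn_const measure_ball_lt_top.ne
      · exact (ae_restrict_iff' hball).2 hb
    rw [setIntegral_const, smul_eq_mul] at this
    calc ∫ v in ball c R, f v ≤ (volume (ball c R)).toReal * B := this
      _ = B * (R ^ 3 * kap) := by rw [vol_ball c hR.le]; ring
  have hb2 : ∫ v in (ball c R)ᶜ, f v ≤ R⁻¹ ^ 2 * ∫ v, ‖v - c‖ ^ 2 * f v := by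
    have step1 : ∫ v in (ball c R)ᶜ, f v ≤ ∫ v in (ball c R)ᶜ, R⁻¹ ^ 2 * (‖v - c‖ ^ 2 * f v) := by
      refine integral_mono_of_nonneg (Filter.Eventually.of_forall fun v => h0 v)
        ((h2.const_mul _).integrableOn) ?_
      refine (ae_restrict_iff' hball.compl).2 (Filter.Eventually.of_forall fun v hv => ?_)
      have hvc : R ≤ ‖v - c‖ := by
        have := hv
        simp only [mem_compl_iff, mem_ball, not_lt, dist_eq_norm] at this
        exact this
      have hR2 : R ^ 2 ≤ ‖v - c‖ ^ 2 := by
        apply sq_le_sq' <;> nlinarith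
      show f v ≤ R⁻¹ ^ 2 * (‖v - c‖ ^ 2 * f v)
      rw [inv_pow, ← sub_nonneg]
      have key : (R ^ 2)⁻¹ * (‖v - c‖ ^ 2 * f v) - f v
          = ((R ^ 2)⁻¹ * (‖v - c‖ ^ 2 - R ^ 2)) * f v := by
        field_simp
      rw [key]
      have h1 : 0 ≤ ‖v - c‖ ^ 2 - R ^ 2 := by linarith
      have h2 := h0 v
      positivity
    rw [integral_const_mul] at step1
    have step2 : ∫ v in (ball c R)ᶜ, ‖v - c‖ ^ 2 * f v ≤ ∫ v, ‖v - c‖ ^ 2 * f v :=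
      setIntegral_le_integral h2 (Filter.Eventually.of_forall fun v => h2nn v)
    have : R⁻¹ ^ 2 * ∫ v in (ball c R)ᶜ, ‖v - c‖ ^ 2 * f v
        ≤ R⁻¹ ^ 2 * ∫ v, ‖v - c‖ ^ 2 * f v := by
      apply mul_le_mul_of_nonneg_left step2 (by positivity)
    linarith
  linarith

lemma tail_measset (S : ℝ) : MeasurableSet {v : E3 | S < ‖v‖} :=
  measurableSet_lt measurable_const measurable_norm

lemma tail_integrable {q S : ℝ} (hq : 5 < q) (hS : 0 < S) :
    IntegrableOn (fun v : E3 => ‖v‖ ^ (2 - q)) {v : E3 | S < ‖v‖} := by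
  have hint : Integrable (fun v : E3 => ((S + 1) / S) ^ (q - 2) * (1 + ‖v‖) ^ (-(q - 2))) :=
    (integrable_one_add_norm (by rw [finrank_E3]; push_cast; linarith)).const_mul _
  refine hint.integrableOn.mono' ?_ ?_
  · exact ((by fun_prop : Measurable fun v : E3 => ‖v‖ ^ (2 - q))).aestronglyMeasurable.restrict
  · refine (ae_restrict_iff' (tail_measset S)).2 (Filter.Eventually.of_forall fun v hv => ?_)
    have hv' : S < ‖v‖ := hv
    have hvpos : 0 < ‖v‖ := hS.trans hv'
    have h1 : 1 + ‖v‖ ≤ (S + 1) / S * ‖v‖ := by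
      rw [div_mul_eq_mul_div, le_div_iff₀ hS]
      nlinarith
    have h2 : (1 + ‖v‖) ^ (q - 2) ≤ ((S + 1) / S) ^ (q - 2) * ‖v‖ ^ (q - 2) := by
      rw [← Real.mul_rpow (by positivity) hvpos.le]
      exact Real.rpow_le_rpow (by positivity) h1 (by linarith)
    rw [Real.norm_eq_abs, abs_of_nonneg (Real.rpow_nonneg hvpos.le _)]
    have hinv : ‖v‖ ^ (2 - q) = (‖v‖ ^ (q - 2))⁻¹ := by
      rw [← Real.rpow_neg hvpos.le]; ring_nf
    have hinv2 : (1 + ‖v‖) ^ (-(q - 2)) = ((1 + ‖v‖) ^ (q - 2))⁻¹ :=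
      Real.rpow_neg (by positivity) _
    rw [hinv, hinv2]
    have A : 0 < ‖v‖ ^ (q - 2) := Real.rpow_pos_of_pos hvpos _
    have B : 0 < (1 + ‖v‖) ^ (q - 2) := Real.rpow_pos_of_pos (by positivity) _
    nlinarith [mul_nonneg (sub_nonneg.2 h2) (mul_pos (inv_pos.2 A) (inv_pos.2 B)).le,
      mul_inv_cancel₀ A.ne', mul_inv_cancel₀ B.ne', inv_pos.2 A, inv_pos.2 B]

lemma tail_integral {q S : ℝ} (hq : 5 < q) (hS : 0 < S) :
    ∫ v in {v : E3 | S < ‖v‖}, ‖v‖ ^ (2 - q) = 3 * kap * (S ^ (5 - q) / (q - 5)) := by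
  rw [← integral_indicator (tail_measset S)]
  have hrw : (Set.indicator {v : E3 | S < ‖v‖} (fun v => ‖v‖ ^ (2 - q)))
      = fun v : E3 => Set.indicator (Ioi S) (fun y : ℝ => y ^ (2 - q)) ‖v‖ := by
    funext v; by_cases h : S < ‖v‖ <;> simp [Set.indicator, h]
  rw [hrw, MeasureTheory.integral_fun_norm_addHaar volume
    (Set.indicator (Ioi S) (fun y : ℝ => y ^ (2 - q))), finrank_E3]
  have hrw2 : ∀ y ∈ Ioi (0:ℝ), y ^ (3 - 1) • Set.indicator (Ioi S) (fun y : ℝ => y ^ (2 - q)) y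
      = Set.indicator (Ioi S) (fun y : ℝ => y ^ (4 - q)) y := by
    intro y hy
    by_cases h : y ∈ Ioi S
    · have hypos : 0 < y := hS.trans h
      simp only [Set.indicator_of_mem h, smul_eq_mul]
      rw [show ((3:ℕ) - 1) = 2 from rfl, ← Real.rpow_natCast y 2, ← Real.rpow_add hypos]
      congr 1
      push_cast
      ring
    · simp [Set.indicator_of_notMem h]
  rw [setIntegral_congr_fun measurableSet_Ioi hrw2]
  rw [setIntegral_indicator measurableSet_Ioi,
    show Ioi (0:ℝ) ∩ Ioi S = Ioi S by rw [Ioi_inter_Ioi, max_eq_right hS.le]]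
  rw [integral_Ioi_rpow_of_lt (by linarith) hS]
  have : (4 - q) + 1 = -(q - 5) := by ring
  rw [this, show (5 - q : ℝ) = -(q - 5) by ring, Real.rpow_neg hS.le, nsmul_eq_mul, smul_eq_mul,
    neg_div_neg_eq]
  unfold kap
  push_cast
  simp only [measureReal_def]
  ring

lemma exp_bound {q T x : ℝ} (hq : 0 < q) (hT : 0 < T) (hx : 0 ≤ x) :
    x ^ q * Real.exp (-x ^ 2 / (2 * T)) ≤
      ((Nat.ceil (q / 2)).factorial * 2 ^ (Nat.ceil (q / 2))) * T ^ (q / 2) := by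
  set m : ℕ := Nat.ceil (q / 2) with hm
  have hmq : q - 2 * m ≤ 0 := by
    have := Nat.le_ceil (q / 2)
    rw [← hm] at this
    linarith
  have hfac1 : (1 : ℝ) ≤ m.factorial := by exact_mod_cast m.factorial_pos
  have hfac2 : (1 : ℝ) ≤ 2 ^ m := one_le_pow₀ one_le_two
  have hxq : x ^ q = (x ^ (2 : ℕ)) ^ (q / 2) := by
    rw [← Real.rpow_natCast x 2, ← Real.rpow_mul hx]
    congr 1
    ring
  have hTq : (0 : ℝ) ≤ T ^ (q / 2) := Real.rpow_nonneg hT.le _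
  by_cases hc : x ^ 2 ≤ T
  · have h1 : x ^ q ≤ T ^ (q / 2) := by
      rw [hxq]; exact Real.rpow_le_rpow (by positivity) hc (by positivity)
    have h2 : Real.exp (-x ^ 2 / (2 * T)) ≤ 1 := by
      rw [Real.exp_le_one_iff]
      apply div_nonpos_of_nonpos_of_nonneg (by simp [sq_nonneg]) (by positivity)
    have h3 : (0:ℝ) ≤ x ^ q := Real.rpow_nonneg hx _
    have h4 : (0:ℝ) < Real.exp (-x ^ 2 / (2 * T)) := Real.exp_pos _
    calc x ^ q * Real.exp (-x ^ 2 / (2 * T)) ≤ x ^ q := by nlinarith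
      _ ≤ T ^ (q / 2) := h1
      _ ≤ ((m.factorial : ℝ) * 2 ^ m) * T ^ (q / 2) :=
          le_mul_of_one_le_left hTq (by nlinarith)
  · push_neg at hc
    have hxpos : 0 < x := by nlinarith
    have hz : (0 : ℝ) ≤ x ^ 2 / (2 * T) := by positivity
    have hek := Real.pow_div_factorial_le_exp (x := x ^ 2 / (2 * T)) hz m
    have hpow : (0:ℝ) < (x ^ 2 / (2 * T)) ^ m / m.factorial := by positivity
    have hexp : Real.exp (-x ^ 2 / (2 * T)) ≤ m.factorial * (2 * T) ^ m / x ^ (2 * m) := by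
      rw [show -x ^ 2 / (2 * T) = -(x ^ 2 / (2 * T)) by ring, Real.exp_neg]
      calc (Real.exp (x ^ 2 / (2 * T)))⁻¹ ≤ ((x ^ 2 / (2 * T)) ^ m / m.factorial)⁻¹ := by
            exact inv_anti₀ hpow hek
        _ = m.factorial * (2 * T) ^ m / x ^ (2 * m) := by
            rw [div_pow, pow_mul]
            field_simp
    have step1 : x ^ q * Real.exp (-x ^ 2 / (2 * T))
        ≤ x ^ q * (m.factorial * (2 * T) ^ m / x ^ (2 * m)) :=
      mul_le_mul_of_nonneg_left hexp (Real.rpow_nonneg hx _)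
    have hxqm : x ^ q / x ^ (2 * m) = x ^ (q - 2 * m) := by
      rw [← Real.rpow_natCast x (2 * m), ← Real.rpow_sub hxpos]
      push_cast
      ring_nf
    have hxqm2 : x ^ (q - 2 * m) ≤ T ^ ((q - 2 * m) / 2) := by
      have h5 : x ^ (q - 2 * m) = (x ^ (2:ℕ)) ^ ((q - 2 * m) / 2) := by
        rw [← Real.rpow_natCast x 2, ← Real.rpow_mul hx]
        congr 1
        ring
      rw [h5]
      exact Real.rpow_le_rpow_of_nonpos hT hc.le (by linarith)
    have hTm : T ^ m * T ^ ((q - 2 * m) / 2) = T ^ (q / 2) := by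
      rw [← Real.rpow_natCast T m, ← Real.rpow_add hT]
      congr 1
      push_cast
      ring
    calc x ^ q * Real.exp (-x ^ 2 / (2 * T))
        ≤ x ^ q * (m.factorial * (2 * T) ^ m / x ^ (2 * m)) := step1
      _ = (m.factorial * 2 ^ m) * (T ^ m * (x ^ q / x ^ (2 * m))) := by
          rw [mul_pow]; ring
      _ = (m.factorial * 2 ^ m) * (T ^ m * x ^ (q - 2 * m)) := by rw [hxqm]
      _ ≤ (m.factorial * 2 ^ m) * (T ^ m * T ^ ((q - 2 * m) / 2)) := by
          apply mul_le_mul_of_nonneg_left (mul_le_mul_of_nonneg_left hxqm2 (by positivity))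
          positivity
      _ = (m.factorial * 2 ^ m) * T ^ (q / 2) := by rw [hTm]

section moments

variable {f : E3 → ℝ} (hm : Measurable f) (h0 : ∀ v, 0 ≤ f v)
  (hI : Integrable fun v => (1 + ‖v‖ ^ 2) * f v)

include hm h0 hI

lemma int_f : Integrable f := by
  refine hI.mono' hm.aestronglyMeasurable (Filter.Eventually.of_forall fun v => ?_)
  rw [Real.norm_eq_abs, abs_of_nonneg (h0 v)]
  nlinarith [h0 v, sq_nonneg ‖v‖]

lemma int_smul : Integrable (fun v => f v • v) := by
  refine hI.mono' ?_ (Filter.Eventually.of_forall fun v => ?_)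
  · exact (hm.aestronglyMeasurable.smul aestronglyMeasurable_id)
  · rw [norm_smul, Real.norm_eq_abs, abs_of_nonneg (h0 v)]
    nlinarith [h0 v, sq_nonneg (‖v‖ - 1), norm_nonneg v, sq_nonneg ‖v‖]

lemma int_nsq : Integrable (fun v => ‖v‖ ^ 2 * f v) := by
  refine hI.mono' ?_ (Filter.Eventually.of_forall fun v => ?_)
  · exact ((measurable_norm.pow_const 2).mul hm).aestronglyMeasurable
  · rw [Real.norm_eq_abs, abs_of_nonneg (mul_nonneg (sq_nonneg _) (h0 v))]
    nlinarith [h0 v, sq_nonneg ‖v‖]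

lemma int_sub_sq (c : E3) : Integrable (fun v => ‖v - c‖ ^ 2 * f v) := by
  refine (hI.const_mul (2 + 2 * ‖c‖ ^ 2)).mono' ?_ (Filter.Eventually.of_forall fun v => ?_)
  · exact (((measurable_id.sub measurable_const).norm.pow_const 2).mul hm).aestronglyMeasurable
  · rw [Real.norm_eq_abs, abs_of_nonneg (mul_nonneg (sq_nonneg _) (h0 v))]
    have h1 : ‖v - c‖ ^ 2 ≤ 2 * ‖v‖ ^ 2 + 2 * ‖c‖ ^ 2 := by
      have h2 := norm_sub_le v c
      have h3 := norm_nonneg (v - c)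
      nlinarith [sq_nonneg (‖v‖ - ‖c‖)]
    nlinarith [h0 v, sq_nonneg ‖v‖, sq_nonneg ‖c‖,
      mul_le_mul_of_nonneg_right h1 (h0 v), mul_nonneg (sq_nonneg ‖c‖) (mul_nonneg (sq_nonneg ‖v‖) (h0 v))]

lemma first_moment (hρ : 0 < dens f) : ∫ v, f v • v = dens f • bulk f := by
  rw [bulk, smul_smul, mul_inv_cancel₀ hρ.ne', one_smul]

lemma moment_ineq (hρ : 0 < dens f) :
    ∫ v, ‖v - bulk f‖ ^ 2 * f v ≤ ∫ v, ‖v‖ ^ 2 * f v := by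
  set U := bulk f with hU
  have i1 : Integrable (fun v => ‖v‖ ^ 2 * f v) := int_nsq hm h0 hI
  have i2 : Integrable (fun v => (inner ℝ U v : ℝ) * f v) := by
    refine (hI.const_mul ‖U‖).mono' ?_ (Filter.Eventually.of_forall fun v => ?_)
    · exact ((measurable_const.inner measurable_id).mul hm).aestronglyMeasurable
    · rw [Real.norm_eq_abs, abs_mul, abs_of_nonneg (h0 v)]
      have h1 : |(inner ℝ U v : ℝ)| ≤ ‖U‖ * ‖v‖ := abs_real_inner_le_norm U v
      have h2 : ‖v‖ ≤ 1 + ‖v‖ ^ 2 := by nlinarith [sq_nonneg (‖v‖ - 1)]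
      have := h0 v
      have := norm_nonneg U
      calc |(inner ℝ U v : ℝ)| * f v ≤ (‖U‖ * ‖v‖) * f v := by
            apply mul_le_mul_of_nonneg_right h1 (h0 v)
        _ ≤ ‖U‖ * ((1 + ‖v‖ ^ 2) * f v) := by
            nlinarith [mul_le_mul_of_nonneg_right
              (mul_le_mul_of_nonneg_left h2 (norm_nonneg U)) (h0 v)]
  have i3 : Integrable (fun v => ‖U‖ ^ 2 * f v) := (int_f hm h0 hI).const_mul _
  have hexp : (fun v => ‖v - U‖ ^ 2 * f v)
      = fun v => (‖v‖ ^ 2 * f v - 2 * ((inner ℝ U v : ℝ) * f v)) + ‖U‖ ^ 2 * f v := by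
    funext v
    have : ‖v - U‖ ^ 2 = ‖v‖ ^ 2 - 2 * (inner ℝ v U : ℝ) + ‖U‖ ^ 2 := norm_sub_sq_real v U
    rw [this, real_inner_comm v U]
    ring
  have hii : ∫ v, (inner ℝ U v : ℝ) * f v = (dens f) * ‖U‖ ^ 2 := by
    have : (fun v => (inner ℝ U v : ℝ) * f v) = fun v => (inner ℝ U (f v • v) : ℝ) := by
      funext v
      rw [inner_smul_right]
      ring
    rw [this, integral_inner (int_smul hm h0 hI) U, first_moment hm h0 hI hρ, inner_smul_right,
      real_inner_self_eq_norm_sq]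
  have i12 : Integrable (fun v => ‖v‖ ^ 2 * f v - 2 * ((inner ℝ U v : ℝ) * f v)) :=
    i1.sub (i2.const_mul 2)
  have hsum : ∫ v, (‖v‖ ^ 2 * f v - 2 * ((inner ℝ U v : ℝ) * f v) + ‖U‖ ^ 2 * f v)
      = ((∫ v, ‖v‖ ^ 2 * f v) - 2 * ∫ v, (inner ℝ U v : ℝ) * f v) + ‖U‖ ^ 2 * ∫ v, f v := by
    rw [integral_add i12 i3, integral_sub i1 (i2.const_mul 2), integral_const_mul,
      integral_const_mul]
  have hdf : ∫ v, f v = dens f := rfl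
  rw [hexp, hsum, hii, hdf]
  nlinarith [mul_nonneg hρ.le (sq_nonneg ‖U‖)]

end moments

lemma sqrt_cube {a : ℝ} (ha : 0 ≤ a) : Real.sqrt a ^ 3 = a ^ ((3:ℝ)/2) := by
  rw [Real.sqrt_eq_rpow, ← Real.rpow_natCast (a ^ ((1:ℝ)/2)) 3, ← Real.rpow_mul ha]
  norm_num

section bmain

variable {f : E3 → ℝ} (hm : Measurable f) (h0 : ∀ v, 0 ≤ f v)
  (hI : Integrable fun v => (1 + ‖v‖ ^ 2) * f v)

include hm h0 hI

lemma second_moment_eq (hρ : 0 < dens f) :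
    ∫ v, ‖v - bulk f‖ ^ 2 * f v = 3 * dens f * temp f := by
  have h3ρ : (3 : ℝ) * dens f ≠ 0 := by positivity
  rw [temp, ← mul_assoc, mul_inv_cancel₀ h3ρ, one_mul]

lemma B1' (hρ : 0 < dens f) (hT : 0 < temp f) {B : ℝ} (hB : 0 ≤ B)
    (hfB : ∀ᵐ v, v ∈ Metric.ball (bulk f) (Real.sqrt (6 * temp f)) → f v ≤ B) :
    dens f * temp f ^ (-(3:ℝ)/2) ≤ 2 * kap * 6 ^ ((3:ℝ)/2) * B := by
  set T := temp f with hTdef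
  set R := Real.sqrt (6 * T) with hRdef
  have hR : 0 < R := Real.sqrt_pos.2 (by positivity)
  have hcut := cutoff h0 (int_f hm h0 hI) (int_sub_sq hm h0 hI (bulk f)) hR hB hfB
  rw [second_moment_eq hm h0 hI hρ] at hcut
  have hR2 : R ^ 2 = 6 * T := Real.sq_sqrt (by positivity)
  have hR3 : R ^ 3 = 6 ^ ((3:ℝ)/2) * T ^ ((3:ℝ)/2) := by
    rw [hRdef, sqrt_cube (by positivity), Real.mul_rpow (by norm_num) hT.le]
  have hhalf : R⁻¹ ^ 2 * (3 * dens f * T) = dens f / 2 := by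
    rw [inv_pow, hR2]
    field_simp
    ring
  rw [hhalf, hR3, show (∫ v, f v) = dens f from rfl] at hcut
  have hρT : dens f ≤ 2 * kap * 6 ^ ((3:ℝ)/2) * B * T ^ ((3:ℝ)/2) := by nlinarith
  have hTpos : (0:ℝ) < T ^ ((3:ℝ)/2) := Real.rpow_pos_of_pos hT _
  have hTneg : (0:ℝ) < T ^ (-(3:ℝ)/2) := Real.rpow_pos_of_pos hT _
  have hcancel : T ^ ((3:ℝ)/2) * T ^ (-(3:ℝ)/2) = 1 := by
    rw [← Real.rpow_add hT]
    norm_num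
  calc dens f * T ^ (-(3:ℝ)/2)
      ≤ (2 * kap * 6 ^ ((3:ℝ)/2) * B * T ^ ((3:ℝ)/2)) * T ^ (-(3:ℝ)/2) :=
        mul_le_mul_of_nonneg_right hρT hTneg.le
    _ = 2 * kap * 6 ^ ((3:ℝ)/2) * B * (T ^ ((3:ℝ)/2) * T ^ (-(3:ℝ)/2)) := by ring
    _ = 2 * kap * 6 ^ ((3:ℝ)/2) * B := by rw [hcancel, mul_one]

end bmain

section b3

variable {f : E3 → ℝ} (hm : Measurable f) (h0 : ∀ v, 0 ≤ f v)
  (hI : Integrable fun v => (1 + ‖v‖ ^ 2) * f v)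

include hm h0 hI

lemma B3 {q : ℝ} (hq5 : 5 < q) (hρ : 0 < dens f) (hT : 0 < temp f)
    {N : ℝ} (hN : 0 ≤ N) (hae : ∀ᵐ v, (1 + ‖v‖ ^ q) * f v ≤ N) :
    dens f * temp f ^ ((q - 3) / 2) ≤ (3 * kap / (q - 5) * 2 ^ ((5 - q) / 2)) * N := by
  set T := temp f with hTdef
  set S := Real.sqrt (2 * T) with hSdef
  have hS : 0 < S := Real.sqrt_pos.2 (by positivity)
  have hS2 : S ^ 2 = 2 * T := Real.sq_sqrt (by positivity)
  have i1 : Integrable (fun v => ‖v‖ ^ 2 * f v) := int_nsq hm h0 hI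
  have hmom : 3 * dens f * T ≤ ∫ v, ‖v‖ ^ 2 * f v := by
    rw [← second_moment_eq hm h0 hI hρ]
    exact moment_ineq hm h0 hI hρ
  set A := {v : E3 | S < ‖v‖} with hAdef
  have hAm : MeasurableSet A := tail_measset S
  have hsplit : (∫ v in A, ‖v‖ ^ 2 * f v) + ∫ v in Aᶜ, ‖v‖ ^ 2 * f v = ∫ v, ‖v‖ ^ 2 * f v :=
    integral_add_compl hAm i1
  have hc1 : ∫ v in Aᶜ, ‖v‖ ^ 2 * f v ≤ S ^ 2 * dens f := by
    have e1 : ∫ v in Aᶜ, ‖v‖ ^ 2 * f v ≤ ∫ v in Aᶜ, S ^ 2 * f v := by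
      refine integral_mono_of_nonneg
        (Filter.Eventually.of_forall fun v => mul_nonneg (sq_nonneg _) (h0 v))
        (((int_f hm h0 hI).const_mul _).integrableOn) ?_
      refine (ae_restrict_iff' hAm.compl).2 (Filter.Eventually.of_forall fun v hv => ?_)
      have hvS : ‖v‖ ≤ S := by
        have : ¬ S < ‖v‖ := hv
        linarith [not_lt.1 this]
      have : ‖v‖ ^ 2 ≤ S ^ 2 := by nlinarith [norm_nonneg v]
      exact mul_le_mul_of_nonneg_right this (h0 v)
    have e2 : ∫ v in Aᶜ, S ^ 2 * f v ≤ S ^ 2 * dens f := by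
      rw [integral_const_mul]
      have := setIntegral_le_integral (int_f hm h0 hI)
        (Filter.Eventually.of_forall fun v => h0 v) (s := Aᶜ)
      have hS2' : (0:ℝ) ≤ S ^ 2 := sq_nonneg _
      exact mul_le_mul_of_nonneg_left this hS2'
    linarith
  have hc2 : ∫ v in A, ‖v‖ ^ 2 * f v ≤ N * (3 * kap * (S ^ (5 - q) / (q - 5))) := by
    have e1 : ∫ v in A, ‖v‖ ^ 2 * f v ≤ ∫ v in A, N * ‖v‖ ^ (2 - q) := by
      refine integral_mono_of_nonneg
        (Filter.Eventually.of_forall fun v => mul_nonneg (sq_nonneg _) (h0 v))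
        ((tail_integrable hq5 hS).const_mul N) ?_
      have h' : ∀ᵐ v ∂(volume.restrict A), (1 + ‖v‖ ^ q) * f v ≤ N := ae_restrict_of_ae hae
      have h'' : ∀ᵐ v ∂(volume.restrict A), v ∈ A := ae_restrict_mem hAm
      filter_upwards [h', h''] with v h1 h2
      have hvpos : 0 < ‖v‖ := hS.trans h2
      have hqpos : (0:ℝ) < ‖v‖ ^ q := Real.rpow_pos_of_pos hvpos _
      have hfv : f v * ‖v‖ ^ q ≤ N := by nlinarith [h0 v]
      have hfv2 : f v ≤ N / ‖v‖ ^ q := (le_div_iff₀ hqpos).2 hfv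
      have hkey : ‖v‖ ^ (2:ℕ) * (N / ‖v‖ ^ q) = N * ‖v‖ ^ (2 - q) := by
        rw [← Real.rpow_natCast ‖v‖ 2, Real.rpow_sub hvpos]
        push_cast
        ring
      calc ‖v‖ ^ 2 * f v ≤ ‖v‖ ^ 2 * (N / ‖v‖ ^ q) :=
            mul_le_mul_of_nonneg_left hfv2 (sq_nonneg _)
        _ = N * ‖v‖ ^ (2 - q) := hkey
    have e2 : ∫ v in A, N * ‖v‖ ^ (2 - q) = N * (3 * kap * (S ^ (5 - q) / (q - 5))) := by
      rw [integral_const_mul, tail_integral hq5 hS]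
    linarith
  have hρT : dens f * T ≤ (3 * kap / (q - 5)) * S ^ (5 - q) * N := by
    have hq5' : (0:ℝ) < q - 5 := by linarith
    have hSpos : (0:ℝ) < S ^ (5 - q) := Real.rpow_pos_of_pos hS _
    have heq : N * (3 * kap * (S ^ (5 - q) / (q - 5))) = (3 * kap / (q - 5)) * S ^ (5 - q) * N := by
      field_simp
    have hS2eq : S ^ 2 * dens f = 2 * (dens f * T) := by rw [hS2]; ring
    nlinarith [hmom, hsplit, hc1, hc2, heq, hS2eq]
  have hSpow : S ^ (5 - q) = 2 ^ ((5 - q) / 2) * T ^ ((5 - q) / 2) := by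
    rw [hSdef, Real.sqrt_eq_rpow, ← Real.rpow_mul (by positivity : (0:ℝ) ≤ 2 * T),
      show (1:ℝ) / 2 * (5 - q) = (5 - q) / 2 by ring,
      Real.mul_rpow (by norm_num) hT.le]
  have hq35 : T ^ ((q - 3) / 2) = T * T ^ ((q - 5) / 2) := by
    rw [show (q - 3) / 2 = 1 + (q - 5) / 2 by ring, Real.rpow_add hT, Real.rpow_one]
  have hcanc : T ^ ((5 - q) / 2) * T ^ ((q - 5) / 2) = 1 := by
    rw [← Real.rpow_add hT, show (5 - q) / 2 + (q - 5) / 2 = 0 by ring, Real.rpow_zero]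
  calc dens f * T ^ ((q - 3) / 2) = (dens f * T) * T ^ ((q - 5) / 2) := by rw [hq35]; ring
    _ ≤ ((3 * kap / (q - 5)) * S ^ (5 - q) * N) * T ^ ((q - 5) / 2) :=
        mul_le_mul_of_nonneg_right hρT (Real.rpow_nonneg hT.le _)
    _ = (3 * kap / (q - 5) * 2 ^ ((5 - q) / 2)) * N * (T ^ ((5 - q) / 2) * T ^ ((q - 5) / 2)) := by
        rw [hSpow]; ring
    _ = (3 * kap / (q - 5) * 2 ^ ((5 - q) / 2)) * N := by rw [hcanc, mul_one]

end b3

lemma ae_bound {q : ℝ} {f : E3 → ℝ} (hw : wnorm q f < ⊤) :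
    ∀ᵐ v, (1 + ‖v‖ ^ q) * f v ≤ (wnorm q f).toReal := by
  have h := ae_le_essSup (f := fun v => ENNReal.ofReal ((1 + ‖v‖ ^ q) * f v)) (μ := volume)
  filter_upwards [h] with v hv
  exact (ENNReal.ofReal_le_iff_le_toReal hw.ne).1 hv

lemma weight_bound {q x u w : ℝ} (hq : 0 ≤ q) (hx : 0 ≤ x) (hu : 0 ≤ u) (hw : 0 ≤ w)
    (h : w ≤ x + u) : w ^ q ≤ 2 ^ q * x ^ q + 2 ^ q * u ^ q := by
  have h2 : (0:ℝ) ≤ 2 := by norm_num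
  rcases le_total x u with hc | hc
  · have hw2 : w ≤ 2 * u := by linarith
    calc w ^ q ≤ (2 * u) ^ q := Real.rpow_le_rpow hw hw2 hq
      _ = 2 ^ q * u ^ q := Real.mul_rpow h2 hu
      _ ≤ 2 ^ q * x ^ q + 2 ^ q * u ^ q := by
          have : (0:ℝ) ≤ 2 ^ q * x ^ q :=
            mul_nonneg (Real.rpow_nonneg h2 _) (Real.rpow_nonneg hx _)
          linarith
  · have hw2 : w ≤ 2 * x := by linarith
    calc w ^ q ≤ (2 * x) ^ q := Real.rpow_le_rpow hw hw2 hq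
      _ = 2 ^ q * x ^ q := Real.mul_rpow h2 hx
      _ ≤ 2 ^ q * x ^ q + 2 ^ q * u ^ q := by
          have : (0:ℝ) ≤ 2 ^ q * u ^ q :=
            mul_nonneg (Real.rpow_nonneg h2 _) (Real.rpow_nonneg hu _)
          linarith

set_option maxHeartbeats 1000000 in
theorem stmt_1 (q : ℝ) (hq : q = 0 ∨ 5 < q) :
    ∃ C : ℝ, 0 < C ∧
      ∀ f : E3 → ℝ, Measurable f → (∀ v, 0 ≤ f v) →
        wnorm q f < ⊤ →
        Integrable (fun v => (1 + ‖v‖ ^ 2) * f v) →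
        0 < dens f → 0 < temp f →
        ∀ v : E3, (1 + ‖v‖ ^ q) * maxw f v ≤ C * (wnorm q f).toReal := by
  have hkap := kap_pos
  rcases hq with rfl | hq5
  · -- q = 0
    refine ⟨2 * kap * 6 ^ ((3:ℝ)/2) * (2 * π) ^ (-(3:ℝ)/2) + 1, ?_, ?_⟩
    · have h1 : (0:ℝ) < (2 * π) ^ (-(3:ℝ)/2) := Real.rpow_pos_of_pos (by positivity) _
      have h2 : (0:ℝ) < 6 ^ ((3:ℝ)/2) := Real.rpow_pos_of_pos (by norm_num) _
      nlinarith [mul_pos (mul_pos (mul_pos two_pos hkap) h2) h1]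
    intro f hm h0 hw hI hρ hT v
    set N := (wnorm 0 f).toReal with hNdef
    have hN : 0 ≤ N := ENNReal.toReal_nonneg
    have hae := ae_bound hw
    have hfB : ∀ᵐ w, w ∈ Metric.ball (bulk f) (Real.sqrt (6 * temp f)) → f w ≤ N / 2 := by
      filter_upwards [hae] with w hw' _
      rw [Real.rpow_zero] at hw'
      linarith
    have hb1 := B1' hm h0 hI hρ hT (by positivity) hfB
    have hE1 : Real.exp (-‖v - bulk f‖ ^ 2 / (2 * temp f)) ≤ 1 := by
      rw [Real.exp_le_one_iff]
      apply div_nonpos_of_nonpos_of_nonneg (by simp [sq_nonneg]) (by positivity)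
    have hG : (2 * π * temp f) ^ (-(3:ℝ)/2) = (2 * π) ^ (-(3:ℝ)/2) * temp f ^ (-(3:ℝ)/2) :=
      Real.mul_rpow (by positivity) hT.le
    have hGp : (0:ℝ) < (2 * π) ^ (-(3:ℝ)/2) := Real.rpow_pos_of_pos (by positivity) _
    have htp : (0:ℝ) < temp f ^ (-(3:ℝ)/2) := Real.rpow_pos_of_pos hT _
    have hM : maxw f v ≤ dens f * temp f ^ (-(3:ℝ)/2) * (2 * π) ^ (-(3:ℝ)/2) := by
      rw [maxw, hG]
      have : dens f * ((2 * π) ^ (-(3:ℝ)/2) * temp f ^ (-(3:ℝ)/2))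
          * Real.exp (-‖v - bulk f‖ ^ 2 / (2 * temp f))
          ≤ dens f * ((2 * π) ^ (-(3:ℝ)/2) * temp f ^ (-(3:ℝ)/2)) * 1 :=
        mul_le_mul_of_nonneg_left hE1 (by positivity)
      calc dens f * ((2 * π) ^ (-(3:ℝ)/2) * temp f ^ (-(3:ℝ)/2))
          * Real.exp (-‖v - bulk f‖ ^ 2 / (2 * temp f))
          ≤ dens f * ((2 * π) ^ (-(3:ℝ)/2) * temp f ^ (-(3:ℝ)/2)) * 1 := this
        _ = dens f * temp f ^ (-(3:ℝ)/2) * (2 * π) ^ (-(3:ℝ)/2) := by ring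
    rw [Real.rpow_zero]
    have hMb : maxw f v ≤ (2 * kap * 6 ^ ((3:ℝ)/2) * (N / 2)) * (2 * π) ^ (-(3:ℝ)/2) :=
      hM.trans (mul_le_mul_of_nonneg_right hb1 hGp.le)
    have hMnn : 0 ≤ maxw f v := by
      rw [maxw]
      have : (0:ℝ) < (2 * π * temp f) ^ (-(3:ℝ)/2) := Real.rpow_pos_of_pos (by positivity) _
      positivity
    calc (1 + 1) * maxw f v = 2 * maxw f v := by ring
      _ ≤ 2 * ((2 * kap * 6 ^ ((3:ℝ)/2) * (N / 2)) * (2 * π) ^ (-(3:ℝ)/2)) := by linarith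
      _ = (2 * kap * 6 ^ ((3:ℝ)/2) * (2 * π) ^ (-(3:ℝ)/2)) * N := by ring
      _ ≤ (2 * kap * 6 ^ ((3:ℝ)/2) * (2 * π) ^ (-(3:ℝ)/2) + 1) * N := by nlinarith
  · -- 5 < q
    have hq0 : (0:ℝ) < q := by linarith
    have h6p : (0:ℝ) < 6 ^ ((3:ℝ)/2) := Real.rpow_pos_of_pos (by norm_num) _
    have hc1p : (0:ℝ) < 2 * kap * 6 ^ ((3:ℝ)/2) := by positivity
    have hc3p : (0:ℝ) < 3 * kap / (q - 5) * 2 ^ ((5 - q)/2) :=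
      mul_pos (div_pos (by positivity) (by linarith)) (Real.rpow_pos_of_pos two_pos _)
    have hKp : (0:ℝ) < ((Nat.ceil (q/2)).factorial * 2 ^ (Nat.ceil (q/2)) : ℝ) := by positivity
    have h2qp : (0:ℝ) < (2:ℝ) ^ q := Real.rpow_pos_of_pos two_pos _
    have h24p : (0:ℝ) < (24:ℝ) ^ (q/2) := Real.rpow_pos_of_pos (by norm_num) _
    have hGp : (0:ℝ) < (2 * π) ^ (-(3:ℝ)/2) := Real.rpow_pos_of_pos (by positivity) _
    refine ⟨(2 * π) ^ (-(3:ℝ)/2) * (2 * kap * 6 ^ ((3:ℝ)/2)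
        + 2 ^ q * (((Nat.ceil (q/2)).factorial * 2 ^ (Nat.ceil (q/2)) : ℝ)
            * (3 * kap / (q - 5) * 2 ^ ((5 - q)/2)))
        + 2 ^ q * (24 ^ (q/2) * (3 * kap / (q - 5) * 2 ^ ((5 - q)/2))
            + 2 ^ q * (2 * kap * 6 ^ ((3:ℝ)/2)))) + 1, ?_, ?_⟩
    · have hSp : (0:ℝ) ≤ 2 * kap * 6 ^ ((3:ℝ)/2)
          + 2 ^ q * (((Nat.ceil (q/2)).factorial * 2 ^ (Nat.ceil (q/2)) : ℝ)
              * (3 * kap / (q - 5) * 2 ^ ((5 - q)/2)))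
          + 2 ^ q * (24 ^ (q/2) * (3 * kap / (q - 5) * 2 ^ ((5 - q)/2))
              + 2 ^ q * (2 * kap * 6 ^ ((3:ℝ)/2))) := by
        have h1 := mul_nonneg h2qp.le (mul_nonneg hKp.le hc3p.le)
        have h2 := mul_nonneg h2qp.le
          (add_nonneg (mul_nonneg h24p.le hc3p.le) (mul_nonneg h2qp.le hc1p.le))
        linarith
      linarith [mul_nonneg hGp.le hSp]
    intro f hm h0 hw hI hρ hT v
    set N := (wnorm q f).toReal with hNdef
    have hN : 0 ≤ N := ENNReal.toReal_nonneg
    have hae := ae_bound hw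
    have hfB : ∀ᵐ w, w ∈ Metric.ball (bulk f) (Real.sqrt (6 * temp f)) → f w ≤ N := by
      filter_upwards [hae] with w hw' _
      have h1 : (0:ℝ) ≤ ‖w‖ ^ q := Real.rpow_nonneg (norm_nonneg _) _
      linarith [mul_nonneg h1 (h0 w), h0 w, hw']
    have hb1 := B1' hm h0 hI hρ hT hN hfB
    have hb3 := B3 hm h0 hI hq5 hρ hT hN hae
    have htp : (0:ℝ) < temp f ^ (-(3:ℝ)/2) := Real.rpow_pos_of_pos hT _
    have hρt : (0:ℝ) ≤ dens f * temp f ^ (-(3:ℝ)/2) := mul_nonneg hρ.le htp.le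
    have hE1 : Real.exp (-‖v - bulk f‖ ^ 2 / (2 * temp f)) ≤ 1 := by
      rw [Real.exp_le_one_iff]
      apply div_nonpos_of_nonpos_of_nonneg (by simp [sq_nonneg]) (by positivity)
    have hE0 : (0:ℝ) < Real.exp (-‖v - bulk f‖ ^ 2 / (2 * temp f)) := Real.exp_pos _
    have hcomb : temp f ^ (-(3:ℝ)/2) * temp f ^ (q/2) = temp f ^ ((q-3)/2) := by
      rw [← Real.rpow_add hT]
      congr 1
      ring
    have term1 : (dens f * temp f ^ (-(3:ℝ)/2)) * Real.exp (-‖v - bulk f‖ ^ 2 / (2 * temp f))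
        ≤ (2 * kap * 6 ^ ((3:ℝ)/2)) * N := by
      calc (dens f * temp f ^ (-(3:ℝ)/2)) * Real.exp (-‖v - bulk f‖ ^ 2 / (2 * temp f))
          ≤ (dens f * temp f ^ (-(3:ℝ)/2)) * 1 := mul_le_mul_of_nonneg_left hE1 hρt
        _ = dens f * temp f ^ (-(3:ℝ)/2) := by ring
        _ ≤ (2 * kap * 6 ^ ((3:ℝ)/2)) * N := by linarith [hb1]
    have hxE := exp_bound hq0 hT (norm_nonneg (v - bulk f))
    have term2 : (dens f * temp f ^ (-(3:ℝ)/2))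
          * (‖v - bulk f‖ ^ q * Real.exp (-‖v - bulk f‖ ^ 2 / (2 * temp f)))
        ≤ (((Nat.ceil (q/2)).factorial * 2 ^ (Nat.ceil (q/2)) : ℝ)
            * (3 * kap / (q - 5) * 2 ^ ((5 - q)/2))) * N := by
      calc (dens f * temp f ^ (-(3:ℝ)/2))
            * (‖v - bulk f‖ ^ q * Real.exp (-‖v - bulk f‖ ^ 2 / (2 * temp f)))
          ≤ (dens f * temp f ^ (-(3:ℝ)/2))
            * (((Nat.ceil (q/2)).factorial * 2 ^ (Nat.ceil (q/2)) : ℝ) * temp f ^ (q/2)) :=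
            mul_le_mul_of_nonneg_left hxE hρt
        _ = ((Nat.ceil (q/2)).factorial * 2 ^ (Nat.ceil (q/2)) : ℝ)
            * (dens f * (temp f ^ (-(3:ℝ)/2) * temp f ^ (q/2))) := by ring
        _ = ((Nat.ceil (q/2)).factorial * 2 ^ (Nat.ceil (q/2)) : ℝ)
            * (dens f * temp f ^ ((q-3)/2)) := by rw [hcomb]
        _ ≤ ((Nat.ceil (q/2)).factorial * 2 ^ (Nat.ceil (q/2)) : ℝ)
            * ((3 * kap / (q - 5) * 2 ^ ((5 - q)/2)) * N) :=
            mul_le_mul_of_nonneg_left hb3 hKp.le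
        _ = (((Nat.ceil (q/2)).factorial * 2 ^ (Nat.ceil (q/2)) : ℝ)
            * (3 * kap / (q - 5) * 2 ^ ((5 - q)/2))) * N := by ring
    have term3 : ‖bulk f‖ ^ q
          * ((dens f * temp f ^ (-(3:ℝ)/2)) * Real.exp (-‖v - bulk f‖ ^ 2 / (2 * temp f)))
        ≤ (24 ^ (q/2) * (3 * kap / (q - 5) * 2 ^ ((5 - q)/2))
            + 2 ^ q * (2 * kap * 6 ^ ((3:ℝ)/2))) * N := by
      have huqnn : (0:ℝ) ≤ ‖bulk f‖ ^ q := Real.rpow_nonneg (norm_nonneg _) _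
      have hstep : ‖bulk f‖ ^ q
            * ((dens f * temp f ^ (-(3:ℝ)/2)) * Real.exp (-‖v - bulk f‖ ^ 2 / (2 * temp f)))
          ≤ ‖bulk f‖ ^ q * (dens f * temp f ^ (-(3:ℝ)/2)) := by
        have := mul_le_mul_of_nonneg_left hE1 hρt
        have h2 := mul_le_mul_of_nonneg_left this huqnn
        calc ‖bulk f‖ ^ q
              * ((dens f * temp f ^ (-(3:ℝ)/2)) * Real.exp (-‖v - bulk f‖ ^ 2 / (2 * temp f)))
            ≤ ‖bulk f‖ ^ q * ((dens f * temp f ^ (-(3:ℝ)/2)) * 1) := h2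
          _ = ‖bulk f‖ ^ q * (dens f * temp f ^ (-(3:ℝ)/2)) := by ring
      by_cases hcase : 24 * temp f < ‖bulk f‖ ^ 2
      · have hu2 : (0:ℝ) < ‖bulk f‖ ^ 2 := lt_of_le_of_lt (by positivity) hcase
        have hu0 : (0:ℝ) < ‖bulk f‖ := by
          rcases (norm_nonneg (bulk f)).lt_or_eq with h | h
          · exact h
          · rw [← h] at hu2
            norm_num at hu2
        have huq : (0:ℝ) < ‖bulk f‖ ^ q := Real.rpow_pos_of_pos hu0 _
        have hfB2 : ∀ᵐ w, w ∈ Metric.ball (bulk f) (Real.sqrt (6 * temp f)) →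
            f w ≤ N * 2 ^ q / ‖bulk f‖ ^ q := by
          have hRu : Real.sqrt (6 * temp f) ≤ ‖bulk f‖ / 2 := by
            have h6 : (6:ℝ) * temp f ≤ (‖bulk f‖ / 2) ^ 2 := by
              rw [div_pow]
              norm_num
              linarith
            have h7 := Real.sqrt_le_sqrt h6
            rwa [Real.sqrt_sq (by positivity)] at h7
          filter_upwards [hae] with w hw' hmem
          have hd : ‖w - bulk f‖ < Real.sqrt (6 * temp f) := by
            rw [Metric.mem_ball, dist_eq_norm] at hmem
            exact hmem
          have hwn : ‖bulk f‖ / 2 ≤ ‖w‖ := by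
            have h1 : ‖bulk f‖ ≤ ‖w‖ + ‖bulk f - w‖ := by
              calc ‖bulk f‖ = ‖w + (bulk f - w)‖ := by rw [add_sub_cancel]
                _ ≤ ‖w‖ + ‖bulk f - w‖ := norm_add_le _ _
            rw [norm_sub_rev] at h1
            linarith
          have hwq : (‖bulk f‖ / 2) ^ q ≤ ‖w‖ ^ q :=
            Real.rpow_le_rpow (by positivity) hwn hq0.le
          have hdiv : (‖bulk f‖ / 2) ^ q = ‖bulk f‖ ^ q / 2 ^ q :=
            Real.div_rpow hu0.le (by norm_num : (0:ℝ) ≤ 2) q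
          have h2 : f w * ‖w‖ ^ q ≤ N := by linarith [h0 w, hw']
          have h3 : f w * (‖bulk f‖ ^ q / 2 ^ q) ≤ N := by
            rw [← hdiv]
            linarith [h2, mul_le_mul_of_nonneg_left hwq (h0 w)]
          have h4 : f w * ‖bulk f‖ ^ q ≤ N * 2 ^ q := by
            have h5 := mul_le_mul_of_nonneg_right h3 h2qp.le
            have h6 : f w * (‖bulk f‖ ^ q / 2 ^ q) * 2 ^ q = f w * ‖bulk f‖ ^ q := by
              field_simp
            rw [h6] at h5
            exact h5
          exact (le_div_iff₀ huq).2 h4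
        have hb2 := B1' hm h0 hI hρ hT
          (B := N * 2 ^ q / ‖bulk f‖ ^ q) (div_nonneg (mul_nonneg hN h2qp.le) huq.le) hfB2
        have h7 : ‖bulk f‖ ^ q * (dens f * temp f ^ (-(3:ℝ)/2))
            ≤ 2 ^ q * (2 * kap * 6 ^ ((3:ℝ)/2)) * N := by
          have h8 := mul_le_mul_of_nonneg_left hb2 huq.le
          have h9 : ‖bulk f‖ ^ q * (2 * kap * 6 ^ ((3:ℝ)/2) * (N * 2 ^ q / ‖bulk f‖ ^ q))
              = 2 ^ q * (2 * kap * 6 ^ ((3:ℝ)/2)) * N := by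
            field_simp
          rw [h9] at h8
          exact h8
        have hextra : (0:ℝ) ≤ 24 ^ (q/2) * (3 * kap / (q - 5) * 2 ^ ((5 - q)/2)) * N :=
          mul_nonneg (mul_nonneg h24p.le hc3p.le) hN
        linarith [hstep, h7, hextra]
      · push_neg at hcase
        have hu24 : ‖bulk f‖ ≤ Real.sqrt (24 * temp f) := by
          have h1 := Real.sqrt_le_sqrt hcase
          rwa [Real.sqrt_sq (norm_nonneg _)] at h1
        have huq : ‖bulk f‖ ^ q ≤ 24 ^ (q/2) * temp f ^ (q/2) := by
          calc ‖bulk f‖ ^ q ≤ Real.sqrt (24 * temp f) ^ q :=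
                Real.rpow_le_rpow (norm_nonneg _) hu24 hq0.le
            _ = (24 * temp f) ^ (q/2) := by
                rw [Real.sqrt_eq_rpow, ← Real.rpow_mul (by positivity)]
                congr 1
                ring
            _ = 24 ^ (q/2) * temp f ^ (q/2) := Real.mul_rpow (by norm_num) hT.le
        have hchain : ‖bulk f‖ ^ q * (dens f * temp f ^ (-(3:ℝ)/2))
            ≤ 24 ^ (q/2) * (3 * kap / (q - 5) * 2 ^ ((5 - q)/2)) * N := by
          calc ‖bulk f‖ ^ q * (dens f * temp f ^ (-(3:ℝ)/2))
              ≤ (24 ^ (q/2) * temp f ^ (q/2)) * (dens f * temp f ^ (-(3:ℝ)/2)) :=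
                mul_le_mul_of_nonneg_right huq hρt
            _ = 24 ^ (q/2) * (dens f * (temp f ^ (-(3:ℝ)/2) * temp f ^ (q/2))) := by ring
            _ = 24 ^ (q/2) * (dens f * temp f ^ ((q-3)/2)) := by rw [hcomb]
            _ ≤ 24 ^ (q/2) * ((3 * kap / (q - 5) * 2 ^ ((5 - q)/2)) * N) :=
                mul_le_mul_of_nonneg_left hb3 h24p.le
            _ = 24 ^ (q/2) * (3 * kap / (q - 5) * 2 ^ ((5 - q)/2)) * N := by ring
        have hextra : (0:ℝ) ≤ 2 ^ q * (2 * kap * 6 ^ ((3:ℝ)/2)) * N :=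
          mul_nonneg (mul_nonneg h2qp.le hc1p.le) hN
        linarith [hstep, hchain, hextra]
    have hG : (2 * π * temp f) ^ (-(3:ℝ)/2) = (2 * π) ^ (-(3:ℝ)/2) * temp f ^ (-(3:ℝ)/2) :=
      Real.mul_rpow (by positivity) hT.le
    have hMv : maxw f v = dens f * ((2 * π) ^ (-(3:ℝ)/2) * temp f ^ (-(3:ℝ)/2))
        * Real.exp (-‖v - bulk f‖ ^ 2 / (2 * temp f)) := by
      rw [maxw, hG]
    have hMnn : 0 ≤ maxw f v := by
      rw [hMv]
      positivity
    have hwb : 1 + ‖v‖ ^ q ≤ 1 + 2 ^ q * ‖v - bulk f‖ ^ q + 2 ^ q * ‖bulk f‖ ^ q := by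
      have hvxu : ‖v‖ ≤ ‖v - bulk f‖ + ‖bulk f‖ := by
        calc ‖v‖ = ‖(v - bulk f) + bulk f‖ := by rw [sub_add_cancel]
          _ ≤ ‖v - bulk f‖ + ‖bulk f‖ := norm_add_le _ _
      have := weight_bound hq0.le (norm_nonneg (v - bulk f)) (norm_nonneg (bulk f))
        (norm_nonneg v) hvxu
      linarith
    calc (1 + ‖v‖ ^ q) * maxw f v
        ≤ (1 + 2 ^ q * ‖v - bulk f‖ ^ q + 2 ^ q * ‖bulk f‖ ^ q) * maxw f v :=
          mul_le_mul_of_nonneg_right hwb hMnn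
      _ = (2 * π) ^ (-(3:ℝ)/2) * ((dens f * temp f ^ (-(3:ℝ)/2))
              * Real.exp (-‖v - bulk f‖ ^ 2 / (2 * temp f))
            + 2 ^ q * ((dens f * temp f ^ (-(3:ℝ)/2))
              * (‖v - bulk f‖ ^ q * Real.exp (-‖v - bulk f‖ ^ 2 / (2 * temp f))))
            + 2 ^ q * (‖bulk f‖ ^ q * ((dens f * temp f ^ (-(3:ℝ)/2))
              * Real.exp (-‖v - bulk f‖ ^ 2 / (2 * temp f))))) := by
          rw [hMv]
          ring
      _ ≤ (2 * π) ^ (-(3:ℝ)/2) * ((2 * kap * 6 ^ ((3:ℝ)/2)) * N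
            + 2 ^ q * ((((Nat.ceil (q/2)).factorial * 2 ^ (Nat.ceil (q/2)) : ℝ)
                * (3 * kap / (q - 5) * 2 ^ ((5 - q)/2))) * N)
            + 2 ^ q * ((24 ^ (q/2) * (3 * kap / (q - 5) * 2 ^ ((5 - q)/2))
                + 2 ^ q * (2 * kap * 6 ^ ((3:ℝ)/2))) * N)) := by
          have t2 := mul_le_mul_of_nonneg_left term2 h2qp.le
          have t3 := mul_le_mul_of_nonneg_left term3 h2qp.le
          exact mul_le_mul_of_nonneg_left
            (add_le_add (add_le_add term1 t2) t3) hGp.le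
      _ = ((2 * π) ^ (-(3:ℝ)/2) * (2 * kap * 6 ^ ((3:ℝ)/2)
            + 2 ^ q * (((Nat.ceil (q/2)).factorial * 2 ^ (Nat.ceil (q/2)) : ℝ)
                * (3 * kap / (q - 5) * 2 ^ ((5 - q)/2)))
            + 2 ^ q * (24 ^ (q/2) * (3 * kap / (q - 5) * 2 ^ ((5 - q)/2))
                + 2 ^ q * (2 * kap * 6 ^ ((3:ℝ)/2))))) * N := by ring
      _ ≤ ((2 * π) ^ (-(3:ℝ)/2) * (2 * kap * 6 ^ ((3:ℝ)/2)
            + 2 ^ q * (((Nat.ceil (q/2)).factorial * 2 ^ (Nat.ceil (q/2)) : ℝ)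
                * (3 * kap / (q - 5) * 2 ^ ((5 - q)/2)))
            + 2 ^ q * (24 ^ (q/2) * (3 * kap / (q - 5) * 2 ^ ((5 - q)/2))
                + 2 ^ q * (2 * kap * 6 ^ ((3:ℝ)/2)))) + 1) * N := by
          apply mul_le_mul_of_nonneg_right _ hN
          linarith


end
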